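/- For all natural numbers n, the double sum over integers i, j of binom(2n, n+i) * binom(2n, n+j) * |i - j| equals 2n * binom(4n, 2n). -/

import Mathlib

open Finset

/-- Binomial coefficient `n.choose k` extended to an integer lower index,
vanishing when `k < 0` (and, as usual, when `k > n`). -/
def ichoose (n : ℕ) (k : ℤ) : ℤ := if 0 ≤ k then (n.choose k.toNat : ℤ) else 0

lemma ichoose_eq_zero {n : ℕ} {k : ℤ} (h : ¬ (0 ≤ k ∧ k ≤ n)) : ichoose n k = 0 := by
  unfold ichoose
  split_ifs with h0
  · have : n < k.toNat := by omega
    simp [Nat.choose_eq_zero_of_lt this]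
  · rfl

/-- telescoping core -/
lemma key (m : ℕ) :
    ∑ s ∈ range (2*m+1), ((2*m).choose s : ℤ) * |(s:ℤ) - m| = m * ((2*m).choose m : ℤ) := by
  rw [range_eq_Ico, ← Finset.sum_Ico_consecutive _ (Nat.zero_le m) (by omega : m ≤ 2*m+1)]
  have h1 : ∑ s ∈ Ico 0 m, ((2*m).choose s : ℤ) * |(s:ℤ) - m|
      = ∑ s ∈ Ico (m+1) (2*m+1), ((2*m).choose s : ℤ) * |(s:ℤ) - m| := by
    apply Finset.sum_nbij' (i := fun s => 2*m - s) (j := fun s => 2*m - s)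
    · intro a ha; simp only [mem_Ico] at *; omega
    · intro a ha; simp only [mem_Ico] at *; omega
    · intro a ha; simp only [mem_Ico] at ha; omega
    · intro a ha; simp only [mem_Ico] at ha; omega
    · intro a ha
      simp only [mem_Ico] at ha
      have hle : a ≤ 2*m := by omega
      rw [Nat.choose_symm hle]
      have h2 : ((2*m - a : ℕ) : ℤ) - m = -((a:ℤ) - m) := by omega
      rw [h2, abs_neg]
  rw [h1]
  rw [Finset.sum_eq_sum_Ico_succ_bot (by omega : m < 2*m+1)]
  simp only [sub_self, abs_zero, mul_zero, zero_add]
  rw [Finset.sum_Ico_eq_sum_range]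
  have hs : ∀ k ∈ range (2*m+1 - (m+1)), ((2*m).choose (m+1+k) : ℤ) * |((m+1+k : ℕ):ℤ) - m|
      = ((2*m).choose (m+1+k) : ℤ) * (k+1) := by
    intro k _
    congr 1
    rw [abs_of_nonneg (by push_cast; omega)]
    push_cast; ring
  rw [Finset.sum_congr rfl hs]
  have hmm : 2*m+1 - (m+1) = m := by omega
  rw [hmm]
  -- telescoping
  have htel : ∀ k ∈ range m,
      ((2*m).choose (m+1+k) : ℤ) * (k+1) + ((2*m).choose (m+1+k) : ℤ) * (k+1)
      = (fun k => ((m+1+k : ℕ):ℤ) * ((2*m).choose (m+1+k) : ℤ)) k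
        - (fun k => ((m+1+k : ℕ):ℤ) * ((2*m).choose (m+1+k) : ℤ)) (k+1) := by
    intro k hk
    simp only [mem_range] at hk
    have hle : m+1+k ≤ 2*m := by omega
    have hc := Nat.choose_succ_right_eq (2*m) (m+1+k)
    zify [hle] at hc
    simp only []
    have : m+1+(k+1) = m+1+k+1 := by omega
    rw [this]
    push_cast
    linear_combination hc
  calc ∑ k ∈ range m, ((2*m).choose (m+1+k) : ℤ) * (k+1)
        + ∑ k ∈ range m, ((2*m).choose (m+1+k) : ℤ) * (k+1)
      = ∑ k ∈ range m, (((2*m).choose (m+1+k) : ℤ) * (k+1) + ((2*m).choose (m+1+k) : ℤ) * (k+1)) := by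
        rw [Finset.sum_add_distrib]
    _ = (fun k => ((m+1+k : ℕ):ℤ) * ((2*m).choose (m+1+k) : ℤ)) 0
        - (fun k => ((m+1+k : ℕ):ℤ) * ((2*m).choose (m+1+k) : ℤ)) m := by
        rw [Finset.sum_congr rfl htel, Finset.sum_range_sub']
    _ = m * ((2*m).choose m : ℤ) := by
        simp only []
        have hz : (2*m).choose (m+1+m) = 0 := Nat.choose_eq_zero_of_lt (by omega)
        rw [hz]
        have hc := Nat.choose_succ_right_eq (2*m) m
        have : 2*m - m = m := by omega
        rw [this] at hc
        push_cast
        have hc' : ((2*m).choose (m+1) : ℤ) * (m+1) = ((2*m).choose m : ℤ) * m := by exact_mod_cast hc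
        linear_combination hc'


lemma vander (m s : ℕ) (hs : s ∈ range (2*m+1)) :
    ∑ p ∈ (range (m+1) ×ˢ range (m+1)).filter (fun p => p.1 + p.2 = s),
      (m.choose p.1 * m.choose p.2 : ℤ) = ((2*m).choose s : ℤ) := by
  have h2m : (2*m).choose s = (m + m).choose s := by ring_nf
  rw [h2m, Nat.add_choose_eq]
  push_cast
  apply Finset.sum_subset
  · intro p hp
    simp only [mem_filter, mem_product, mem_range] at hp
    rw [Finset.HasAntidiagonal.mem_antidiagonal]
    exact hp.2
  · intro p hp hnp
    rw [Finset.HasAntidiagonal.mem_antidiagonal] at hp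
    simp only [mem_filter, mem_product, mem_range] at hnp
    have : m < p.1 ∨ m < p.2 := by omega
    rcases this with h | h <;> simp [Nat.choose_eq_zero_of_lt h]

lemma group (m : ℕ) :
    ∑ a ∈ range (m+1), ∑ b ∈ range (m+1), (m.choose a * m.choose b : ℤ) * |(a:ℤ)+b-m|
      = ∑ s ∈ range (2*m+1), ((2*m).choose s : ℤ) * |(s:ℤ)-m| := by
  rw [← Finset.sum_product']
  rw [← Finset.sum_fiberwise_of_maps_to (g := fun p => p.1 + p.2) (t := range (2*m+1))
    (fun p hp => by simp only [mem_product, mem_range] at hp ⊢; omega)]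
  apply Finset.sum_congr rfl
  intro s hs
  have := vander m s hs
  calc ∑ p ∈ (range (m+1) ×ˢ range (m+1)).filter (fun p => p.1 + p.2 = s),
        (m.choose p.1 * m.choose p.2 : ℤ) * |(p.1:ℤ)+p.2-m|
      = ∑ p ∈ (range (m+1) ×ˢ range (m+1)).filter (fun p => p.1 + p.2 = s),
        (m.choose p.1 * m.choose p.2 : ℤ) * |(s:ℤ)-m| := by
        apply Finset.sum_congr rfl
        intro p hp
        simp only [mem_filter] at hp
        rw [show ((p.1:ℤ)+p.2-m) = ((s:ℤ)-m) from by rw [← hp.2]; push_cast; ring]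
    _ = ((2*m).choose s : ℤ) * |(s:ℤ)-m| := by rw [← Finset.sum_mul, this]

lemma refl_sum (m a : ℕ) :
    ∑ b ∈ range (m+1), (m.choose b : ℤ) * |(a:ℤ) - b|
      = ∑ b ∈ range (m+1), (m.choose b : ℤ) * |(a:ℤ) + b - m| := by
  apply Finset.sum_nbij' (i := fun b => m - b) (j := fun b => m - b)
  · intro b hb; simp only [mem_range] at *; omega
  · intro b hb; simp only [mem_range] at *; omega
  · intro b hb; simp only [mem_range] at hb; omega
  · intro b hb; simp only [mem_range] at hb; omega
  · intro b hb
    simp only [mem_range] at hb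
    have hle : b ≤ m := by omega
    rw [Nat.choose_symm hle]
    congr 1
    have : ((m - b : ℕ):ℤ) = (m:ℤ) - b := by omega
    rw [this]
    rw [show (a:ℤ) + ((m:ℤ) - b) - m = (a:ℤ) - b by ring]

lemma ichoose_natCast (N a : ℕ) : ichoose N (a : ℤ) = (N.choose a : ℤ) := by
  unfold ichoose
  simp

lemma sum_shift (n : ℕ) (f : ℤ → ℤ) :
    ∑ i ∈ Icc (-(n:ℤ)) n, f i = ∑ a ∈ range (2*n+1), f ((a:ℤ) - n) := by
  apply Finset.sum_nbij' (i := fun x : ℤ => (x + n).toNat) (j := fun a : ℕ => (a:ℤ) - n)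
  · intro x hx; simp only [mem_Icc] at hx; simp only [mem_range]; omega
  · intro a ha; simp only [mem_range] at ha; simp only [mem_Icc]; omega
  · intro x hx; simp only [mem_Icc] at hx; omega
  · intro a ha; simp only [mem_range] at ha; omega
  · intro x hx; simp only [mem_Icc] at hx; congr 1; omega

theorem stmt12 (n : ℕ) :
    ∑ᶠ i : ℤ, ∑ᶠ j : ℤ,
        ichoose (2 * n) (n + i) * ichoose (2 * n) (n + j) * |i - j|
      = 2 * n * ((4 * n).choose (2 * n) : ℤ) := by
  have hz : ∀ k : ℤ, k ∉ Icc (-(n:ℤ)) n → ichoose (2*n) (n + k) = 0 := by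
    intro k hk
    simp only [mem_Icc] at hk
    exact ichoose_eq_zero (by push_cast; omega)
  have hinner : ∀ i : ℤ, (∑ᶠ j : ℤ, ichoose (2*n) (n+i) * ichoose (2*n) (n+j) * |i - j|)
      = ∑ j ∈ Icc (-(n:ℤ)) n, ichoose (2*n) (n+i) * ichoose (2*n) (n+j) * |i - j| := by
    intro i
    apply finsum_eq_sum_of_support_subset
    intro j hj
    simp only [Function.mem_support, ne_eq] at hj
    simp only [Finset.coe_Icc, Set.mem_Icc]
    by_contra h
    exact hj (by rw [hz j (by simpa [mem_Icc] using h)]; ring)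
  have houter : (∑ᶠ i : ℤ, ∑ᶠ j : ℤ, ichoose (2*n) (n+i) * ichoose (2*n) (n+j) * |i - j|)
      = ∑ i ∈ Icc (-(n:ℤ)) n, ∑ j ∈ Icc (-(n:ℤ)) n,
          ichoose (2*n) (n+i) * ichoose (2*n) (n+j) * |i - j| := by
    rw [finsum_congr hinner]
    apply finsum_eq_sum_of_support_subset
    intro i hi
    simp only [Function.mem_support, ne_eq] at hi
    simp only [Finset.coe_Icc, Set.mem_Icc]
    by_contra h
    apply hi
    apply Finset.sum_eq_zero
    intro j _
    rw [hz i (by simpa [mem_Icc] using h)]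
    ring
  rw [houter, sum_shift]
  have hterm : ∀ a ∈ range (2*n+1),
      (∑ j ∈ Icc (-(n:ℤ)) n, ichoose (2*n) (n+((a:ℤ)-n)) * ichoose (2*n) (n+j) * |((a:ℤ)-n) - j|)
      = ∑ b ∈ range (2*n+1), ((2*n).choose a * (2*n).choose b : ℤ) * |(a:ℤ) - b| := by
    intro a _
    rw [sum_shift]
    apply Finset.sum_congr rfl
    intro b _
    have h1 : (n:ℤ) + ((a:ℤ) - n) = (a:ℤ) := by ring
    have h2 : (n:ℤ) + ((b:ℤ) - n) = (b:ℤ) := by ring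
    rw [h1, h2, ichoose_natCast, ichoose_natCast]
    have h3 : ((a:ℤ)-n) - ((b:ℤ)-n) = (a:ℤ) - b := by ring
    rw [h3]
  rw [Finset.sum_congr rfl hterm]
  have hstep : ∀ a ∈ range (2*n+1),
      (∑ b ∈ range (2*n+1), ((2*n).choose a * (2*n).choose b : ℤ) * |(a:ℤ) - b|)
      = ∑ b ∈ range (2*n+1), ((2*n).choose a * (2*n).choose b : ℤ) * |(a:ℤ) + b - ((2*n:ℕ):ℤ)| := by
    intro a _
    have := refl_sum (2*n) a
    calc ∑ b ∈ range (2*n+1), ((2*n).choose a * (2*n).choose b : ℤ) * |(a:ℤ) - b|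
        = ((2*n).choose a : ℤ) * ∑ b ∈ range (2*n+1), ((2*n).choose b : ℤ) * |(a:ℤ) - b| := by
          rw [Finset.mul_sum]; apply Finset.sum_congr rfl; intro b _; push_cast; ring
      _ = ((2*n).choose a : ℤ) * ∑ b ∈ range (2*n+1), ((2*n).choose b : ℤ) * |(a:ℤ) + b - ((2*n:ℕ):ℤ)| := by
          rw [this]
      _ = ∑ b ∈ range (2*n+1), ((2*n).choose a * (2*n).choose b : ℤ) * |(a:ℤ) + b - ((2*n:ℕ):ℤ)| := by
          rw [Finset.mul_sum]; apply Finset.sum_congr rfl; intro b _; push_cast; ring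
  rw [Finset.sum_congr rfl hstep, group (2*n), key (2*n),
    show 2*(2*n) = 4*n from by ring]
  push_cast
  ring
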